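/- Let Y be a vector lattice and X a linear subspace of Y that is directed, order dense in Y, and generates Y as a vector lattice. Then X is pervasive in Y if and only if for every two nonempty finite sets A, B ⊆ {x ∈ X | 0 ≤ x} with Aᵘ ⊊ Bᵘ (strict inclusion) there exists x ∈ X with 0 < x such that Aᵘ ⊆ ({x + b | b ∈ B})ᵘ. Here for M ⊆ X the set Mᵘ := {z ∈ X | ∀ m ∈ M, m ≤ z} denotes the upper bounds of M within X. -/

import Mathlib

/-- Let `Y` be a vector lattice and `X` a directed, order dense linear
subspace of `Y` that generates `Y` as a vector lattice. Then `X` is pervasive in `Y` iff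
for all nonempty finite sets `A, B ⊆ {x ∈ X | 0 ≤ x}` with `Aᵘ ⊊ Bᵘ` there is `x ∈ X`,
`0 < x`, with `Aᵘ ⊆ (x + B)ᵘ`, the upper bounds being taken within `X`. -/
theorem statement5
    {Y : Type*} [Lattice Y] [AddCommGroup Y] [Module ℝ Y]
    [CovariantClass Y Y (· + ·) (· ≤ ·)] [PosSMulMono ℝ Y]
    (X : Submodule ℝ Y)
    (hdir : ∀ x ∈ X, ∀ y ∈ X, ∃ z ∈ X, x ≤ z ∧ y ≤ z)
    (hdense : ∀ y : Y, IsGLB {x : Y | x ∈ X ∧ y ≤ x} y)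
    (hgen : ∀ y : Y, ∃ A B : Finset Y, ∃ hA : A.Nonempty, ∃ hB : B.Nonempty,
      (↑A : Set Y) ⊆ (X : Set Y) ∧ (↑B : Set Y) ⊆ (X : Set Y) ∧
      y = A.sup' hA id - B.sup' hB id) :
    (∀ y : Y, 0 < y → ∃ x ∈ X, 0 < x ∧ x ≤ y) ↔
      ∀ A B : Finset Y, A.Nonempty → B.Nonempty →
        (↑A : Set Y) ⊆ {x : Y | x ∈ X ∧ 0 ≤ x} →
        (↑B : Set Y) ⊆ {x : Y | x ∈ X ∧ 0 ≤ x} →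
        {z : Y | z ∈ X ∧ ∀ a ∈ A, a ≤ z} ⊂ {z : Y | z ∈ X ∧ ∀ b ∈ B, b ≤ z} →
        ∃ x ∈ X, 0 < x ∧
          {z : Y | z ∈ X ∧ ∀ a ∈ A, a ≤ z} ⊆ {z : Y | z ∈ X ∧ ∀ b ∈ B, x + b ≤ z} := by
  classical
  haveI i1 : CovariantClass Y Y (Function.swap (· + ·)) (· ≤ ·) :=
    ⟨fun c a b h => by
      simp only [Function.swap]
      calc a + c = c + a := add_comm _ _
        _ ≤ c + b := add_le_add_right h c
        _ = b + c := add_comm _ _⟩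
  haveI i2 : CovariantClass Y Y (· + ·) (· < ·) :=
    ⟨fun c a b h => by
      refine lt_of_le_of_ne (add_le_add_right h.le c) fun he => h.ne ?_
      have := congrArg (fun w => -c + w) he
      simpa using this⟩
  haveI i3 : CovariantClass Y Y (Function.swap (· + ·)) (· < ·) :=
    ⟨fun c a b h => by
      simp only [Function.swap]
      calc a + c = c + a := add_comm _ _
        _ < c + b := add_lt_add_right h c
        _ = b + c := add_comm _ _⟩
  constructor
  · intro hperv A B hAne hBne hA hB hss
    set s := A.sup' hAne id with hs
    set t := B.sup' hBne id with ht
    have hAset : {z : Y | z ∈ X ∧ ∀ a ∈ A, a ≤ z} = {z : Y | z ∈ X ∧ s ≤ z} := by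
      ext z; simp [hs, Finset.sup'_le_iff]
    have hBset : {z : Y | z ∈ X ∧ ∀ b ∈ B, b ≤ z} = {z : Y | z ∈ X ∧ t ≤ z} := by
      ext z; simp [ht, Finset.sup'_le_iff]
    have hts : t ≤ s := by
      refine (hdense s).2 ?_
      intro z hz
      have hzB : z ∈ {z : Y | z ∈ X ∧ ∀ b ∈ B, b ≤ z} := by
        refine hss.1 ?_
        rw [hAset]; exact hz
      exact Finset.sup'_le _ _ fun b hb => hzB.2 b hb
    obtain ⟨z, hzB, hzA⟩ := Set.exists_of_ssubset hss
    have hst : ¬ s ≤ t := by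
      intro h
      apply hzA
      rw [hAset]
      exact ⟨hzB.1, h.trans (Finset.sup'_le _ _ fun b hb => hzB.2 b hb)⟩
    have hlt : t < s := lt_of_le_of_ne hts fun h => hst (h ▸ le_refl s)
    obtain ⟨x, hxX, hx0, hxy⟩ := hperv (s - t) (sub_pos.mpr hlt)
    refine ⟨x, hxX, hx0, ?_⟩
    intro z hz
    rw [hAset] at hz
    refine ⟨hz.1, fun b hb => ?_⟩
    have hbt : b ≤ t := Finset.le_sup' id hb
    have hxt : x + t ≤ s := by
      have := add_le_add_left hxy t
      simpa using this
    calc x + b ≤ x + t := add_le_add_right hbt x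
      _ ≤ s := hxt
      _ ≤ z := hz.2
  · intro hcond y hy
    obtain ⟨A', B', hA'ne, hB'ne, hA'X, hB'X, hy_eq⟩ := hgen y
    have hub : ∀ S : Finset Y, (↑S : Set Y) ⊆ (X : Set Y) → ∃ z ∈ X, ∀ a ∈ S, a ≤ z := by
      intro S
      induction S using Finset.induction with
      | empty => exact fun _ => ⟨0, X.zero_mem, by simp⟩
      | @insert a S _ ih =>
        intro hSX
        rw [Finset.coe_insert, Set.insert_subset_iff] at hSX
        obtain ⟨z, hzX, hz⟩ := ih hSX.2
        obtain ⟨w, hwX, hw1, hw2⟩ := hdir a hSX.1 z hzX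
        exact ⟨w, hwX, fun b hb => by
          rcases Finset.mem_insert.mp hb with rfl | hb
          · exact hw1
          · exact (hz b hb).trans hw2⟩
    have hlb : ∃ u ∈ X, ∀ a ∈ A' ∪ B', u ≤ a := by
      obtain ⟨z, hzX, hz⟩ := hub ((A' ∪ B').image Neg.neg) (by
        intro w hw
        simp only [Finset.coe_image, Set.mem_image, Finset.mem_coe] at hw
        obtain ⟨a, ha, rfl⟩ := hw
        rcases Finset.mem_union.mp ha with h | h
        · exact X.neg_mem (hA'X h)
        · exact X.neg_mem (hB'X h))
      refine ⟨-z, X.neg_mem hzX, fun a ha => ?_⟩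
      have := hz (-a) (Finset.mem_image_of_mem _ ha)
      exact neg_le.mp this
    obtain ⟨u, huX, hu⟩ := hlb
    set A : Finset Y := A'.image (fun a => a - u) with hA_def
    set B : Finset Y := B'.image (fun a => a - u) with hB_def
    set sA := A'.sup' hA'ne id with hsA
    set sB := B'.sup' hB'ne id with hsB
    have hAne : A.Nonempty := hA'ne.image _
    have hBne : B.Nonempty := hB'ne.image _
    have hAsub : (↑A : Set Y) ⊆ {x : Y | x ∈ X ∧ 0 ≤ x} := by
      intro w hw
      simp only [hA_def, Finset.coe_image, Set.mem_image, Finset.mem_coe] at hw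
      obtain ⟨a, ha, rfl⟩ := hw
      exact ⟨X.sub_mem (hA'X ha) huX, sub_nonneg.mpr (hu a (Finset.mem_union_left _ ha))⟩
    have hBsub : (↑B : Set Y) ⊆ {x : Y | x ∈ X ∧ 0 ≤ x} := by
      intro w hw
      simp only [hB_def, Finset.coe_image, Set.mem_image, Finset.mem_coe] at hw
      obtain ⟨b, hb, rfl⟩ := hw
      exact ⟨X.sub_mem (hB'X hb) huX, sub_nonneg.mpr (hu b (Finset.mem_union_right _ hb))⟩
    have hAset : {z : Y | z ∈ X ∧ ∀ a ∈ A, a ≤ z} = {z : Y | z ∈ X ∧ sA - u ≤ z} := by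
      ext z
      simp only [Set.mem_setOf_eq, hA_def, Finset.mem_image]
      constructor
      · rintro ⟨hzX, hz⟩
        refine ⟨hzX, sub_le_iff_le_add.mpr (Finset.sup'_le _ _ fun a ha => ?_)⟩
        have := hz (a - u) ⟨a, ha, rfl⟩
        simpa [sub_le_iff_le_add] using this
      · rintro ⟨hzX, hz⟩
        refine ⟨hzX, ?_⟩
        rintro w ⟨a, ha, rfl⟩
        have : a ≤ sA := Finset.le_sup' id ha
        have h2 : a - u ≤ sA - u := sub_le_sub_right this u
        exact h2.trans hz
    have hBset : {z : Y | z ∈ X ∧ ∀ b ∈ B, b ≤ z} = {z : Y | z ∈ X ∧ sB - u ≤ z} := by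
      ext z
      simp only [Set.mem_setOf_eq, hB_def, Finset.mem_image]
      constructor
      · rintro ⟨hzX, hz⟩
        refine ⟨hzX, sub_le_iff_le_add.mpr (Finset.sup'_le _ _ fun b hb => ?_)⟩
        have := hz (b - u) ⟨b, hb, rfl⟩
        simpa [sub_le_iff_le_add] using this
      · rintro ⟨hzX, hz⟩
        refine ⟨hzX, ?_⟩
        rintro w ⟨b, hb, rfl⟩
        have : b ≤ sB := Finset.le_sup' id hb
        have h2 : b - u ≤ sB - u := sub_le_sub_right this u
        exact h2.trans hz
    have hBlt : sB < sA := by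
      have h0 : 0 < sA - sB := hy_eq ▸ hy
      exact sub_pos.mp h0
    have hss : {z : Y | z ∈ X ∧ ∀ a ∈ A, a ≤ z} ⊂ {z : Y | z ∈ X ∧ ∀ b ∈ B, b ≤ z} := by
      rw [hAset, hBset, ssubset_iff_subset_not_subset]
      constructor
      · intro z hz
        exact ⟨hz.1, (sub_le_sub_right hBlt.le u).trans hz.2⟩
      · intro h
        have hle : sA - u ≤ sB - u := (hdense (sB - u)).2 fun z hz => (h hz).2
        exact absurd ((sub_le_sub_iff_right u).mp hle) hBlt.not_ge
    obtain ⟨x, hxX, hx0, hxsub⟩ := hcond A B hAne hBne hAsub hBsub hss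
    refine ⟨x, hxX, hx0, ?_⟩
    have hlow : ∀ z ∈ {w : Y | w ∈ X ∧ sA - u ≤ w}, x + (sB - u) ≤ z := by
      intro z hz
      have hz' : z ∈ {w : Y | w ∈ X ∧ ∀ b ∈ B, x + b ≤ w} := hxsub (by rw [hAset]; exact hz)
      have hsb : sB ≤ z - x + u := by
        refine Finset.sup'_le _ _ fun b hb => ?_
        have h1 : x + (b - u) ≤ z := hz'.2 (b - u) (by
          simp only [hB_def, Finset.mem_image]; exact ⟨b, hb, rfl⟩)
        have h2 : b - u ≤ z - x := by
          rw [sub_le_sub_iff]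
          calc b + x = x + b := add_comm _ _
            _ ≤ z + u := by
                have := add_le_add_left h1 u
                simpa [add_assoc, sub_add_cancel] using this
        simpa [sub_le_iff_le_add] using h2
      calc x + (sB - u) ≤ x + (z - x + u - u) := by
            exact add_le_add_right (sub_le_sub_right hsb u) x
        _ = z := by abel
    have hfin : x + (sB - u) ≤ sA - u := (hdense (sA - u)).2 hlow
    rw [hy_eq]
    have := sub_le_sub_right hfin (sB - u)
    calc x = x + (sB - u) - (sB - u) := by abel
      _ ≤ sA - u - (sB - u) := this
      _ = sA - sB := by abel
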